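/- (Lemma 2.6(1),(2)) In the generalized matrix ring setting, let φ : R → R be an additive map satisfying condition (P), and define ψ(U) = φ(U) − φ(1)·U + T·U − U·T where T = e·φ(e)·f + f·φ(f)·e and f = 1 − e. Then for every a ∈ R with a = eae and every m ∈ R with m = emf, ψ(a∘m) = ψ(a)∘m + a∘ψ(m); and for every b ∈ R with b = fbf and every n ∈ R with n = fne, ψ(b∘n) = ψ(b)∘n + b∘ψ(n). Here x∘y = xy + yx. -/
import Mathlib

theorem aux {R : Type*} [Ring R] (e f : R)
    (hee : e*e = e) (hff : f*f = f) (hef : e*f = 0) (hfe : f*e = 0) (hef1 : e + f = 1)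
    (h2A : ∀ x : R, e*x*e + e*x*e = 0 → e*x*e = 0)
    (h2B : ∀ x : R, f*x*f + f*x*f = 0 → f*x*f = 0)
    (φ : R →+ R)
    (hP : ∀ U V : R, U*V = 0 → V*U = 0 → φ U*V + V*φ U + U*φ V + φ V*U = 0)
    (ψ : R → R)
    (hψ : ∀ U : R, ψ U = φ U - φ 1*U + ((e*φ e*f + f*φ f*e)*U - U*(e*φ e*f + f*φ f*e))) :
    ∀ a m : R, a = e*a*e → m = e*m*f →
      ψ (a*m + m*a) = (ψ a*m + m*ψ a) + (a*ψ m + ψ m*a) := by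
  -- sandwich-insert helpers
  have skfe : ∀ u v y : R, u*f = u → e*v = v → u*y*v = u*(f*y*e)*v := by
    intro u v y hu hv
    calc u*y*v = (u*f)*y*(e*v) := by rw [hu, hv]
    _ = u*(f*y*e)*v := by noncomm_ring
  have skef : ∀ u v y : R, u*e = u → f*v = v → u*y*v = u*(e*y*f)*v := by
    intro u v y hu hv
    calc u*y*v = (u*e)*y*(f*v) := by rw [hu, hv]
    _ = u*(e*y*f)*v := by noncomm_ring
  have hφ1 : φ 1 = φ e + φ f := by rw [← hef1, map_add]
  have star := hP e f hef hfe
  have Cee : ∀ z : R, e*(e*z) = e*z := fun z => by rw [← mul_assoc, hee]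
  have Cef : ∀ z : R, e*(f*z) = 0 := fun z => by rw [← mul_assoc, hef, zero_mul]
  have Cfe : ∀ z : R, f*(e*z) = 0 := fun z => by rw [← mul_assoc, hfe, zero_mul]
  have Cff : ∀ z : R, f*(f*z) = f*z := fun z => by rw [← mul_assoc, hff]
  -- F1 : e*φ f*e = 0
  have F1 : e*φ f*e = 0 := by
    apply h2A
    have t : e*((φ e*f + f*φ e + e*φ f + φ f*e)*e) = e*(0*e) := by rw [star]
    simp only [mul_add, add_mul, mul_assoc, hee, hef, hfe, hff, Cee, Cef, Cfe, Cff,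
      mul_zero, zero_mul, add_zero, zero_add] at t
    simpa [mul_assoc] using t
  have F2 : f*φ e*f = 0 := by
    apply h2B
    have t : f*((φ e*f + f*φ e + e*φ f + φ f*e)*f) = f*(0*f) := by rw [star]
    simp only [mul_add, add_mul, mul_assoc, hee, hef, hfe, hff, Cee, Cef, Cfe, Cff,
      mul_zero, zero_mul, add_zero, zero_add] at t
    simpa [mul_assoc] using t
  have F3 : e*φ 1*f = 0 := by
    have t : e*((φ e*f + f*φ e + e*φ f + φ f*e)*f) = e*(0*f) := by rw [star]
    simp only [mul_add, add_mul, mul_assoc, hee, hef, hfe, hff, Cee, Cef, Cfe, Cff,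
      mul_zero, zero_mul, add_zero, zero_add] at t
    rw [hφ1]
    simpa [mul_add, add_mul, mul_assoc] using t
  have F4 : f*φ 1*e = 0 := by
    have t : f*((φ e*f + f*φ e + e*φ f + φ f*e)*e) = f*(0*e) := by rw [star]
    simp only [mul_add, add_mul, mul_assoc, hee, hef, hfe, hff, Cee, Cef, Cfe, Cff,
      mul_zero, zero_mul, add_zero, zero_add] at t
    rw [hφ1]
    simpa [mul_add, add_mul, mul_assoc] using t
  have F1c : ∀ z : R, e*(φ f*(e*z)) = 0 := fun z => by
    rw [← mul_assoc, ← mul_assoc, F1, zero_mul]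
  have F1p : e*(φ f*e) = 0 := by rw [← mul_assoc, F1]
  have F2c : ∀ z : R, f*(φ e*(f*z)) = 0 := fun z => by
    rw [← mul_assoc, ← mul_assoc, F2, zero_mul]
  have F2p : f*(φ e*f) = 0 := by rw [← mul_assoc, F2]
  have hz : ∀ X : R, e*(X*e) = 0 → e*(X*f) = 0 → f*(X*e) = 0 → f*(X*f) = 0 → X = 0 := by
    intro X h1 h2 h3 h4
    have h5 : X = (e+f)*X*(e+f) := by rw [hef1, one_mul, mul_one]
    rw [h5]
    calc (e+f)*X*(e+f) = e*(X*e) + e*(X*f) + (f*(X*e) + f*(X*f)) := by noncomm_ring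
    _ = 0 := by rw [h1, h2, h3, h4]; simp
  have ψe0 : ψ e = 0 := by
    rw [hψ e, hφ1]
    apply hz <;>
      (simp only [mul_add, add_mul, mul_sub, sub_mul, mul_neg, neg_mul, mul_assoc,
        hee, hef, hfe, hff, Cee, Cef, Cfe, Cff, F1c, F1p, F2c, F2p,
        mul_zero, zero_mul, add_zero, zero_add, sub_zero, zero_sub, sub_self, neg_zero,
        neg_neg]; try abel)
  have ψf0 : ψ f = 0 := by
    rw [hψ f, hφ1]
    apply hz <;>
      (simp only [mul_add, add_mul, mul_sub, sub_mul, mul_neg, neg_mul, mul_assoc,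
        hee, hef, hfe, hff, Cee, Cef, Cfe, Cff, F1c, F1p, F2c, F2p,
        mul_zero, zero_mul, add_zero, zero_add, sub_zero, zero_sub, sub_self, neg_zero,
        neg_neg]; try abel)
  have hψsub : ∀ X Y : R, ψ (X - Y) = ψ X - ψ Y := by
    intro X Y; rw [hψ, hψ, hψ, map_sub]; noncomm_ring
  have hψadd : ∀ X Y : R, ψ (X + Y) = ψ X + ψ Y := by
    intro X Y; rw [hψ, hψ, hψ, map_add]; noncomm_ring
  have haveP : ∀ U V : R, U*V = 0 → V*U = 0 → U*φ 1*V + V*φ 1*U = 0 →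
      ψ U*V + V*ψ U + (U*ψ V + ψ V*U) = 0 := by
    intro U V h1 h2 h3
    have base := hP U V h1 h2
    calc ψ U*V + V*ψ U + (U*ψ V + ψ V*U)
        = (φ U*V + V*φ U + U*φ V + φ V*U) - (U*φ 1*V + V*φ 1*U) - φ 1*(U*V) - φ 1*(V*U)
          + ((e*φ e*f + f*φ f*e)*(U*V) + (e*φ e*f + f*φ f*e)*(V*U)
            - (U*V)*(e*φ e*f + f*φ f*e) - (V*U)*(e*φ e*f + f*φ f*e)) := by
          rw [hψ U, hψ V]; noncomm_ring
      _ = 0 := by rw [base, h1, h2, h3]; noncomm_ring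
  have key : ∀ x : R, e*x = x → x*f = x → x*e = 0 → f*x = 0 →
      (e*φ 1*x = x*φ 1*f) ∧ (ψ x*f + f*ψ x = ψ x) := by
    intro x hex hxf hxe hfx
    have Cxe : ∀ z : R, x*(e*z) = 0 := fun z => by rw [← mul_assoc, hxe, zero_mul]
    have Cxf : ∀ z : R, x*(f*z) = x*z := fun z => by rw [← mul_assoc, hxf]
    have Cex : ∀ z : R, e*(x*z) = x*z := fun z => by rw [← mul_assoc, hex]
    have Cfx : ∀ z : R, f*(x*z) = 0 := fun z => by rw [← mul_assoc, hfx, zero_mul]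
    have hxx : x*x = 0 := by have h := Cxe x; rw [hex] at h; exact h
    have Cxx : ∀ z : R, x*(x*z) = 0 := fun z => by rw [← mul_assoc, hxx, zero_mul]
    have xφef : x*(φ e*f) = 0 := by rw [← Cxf (φ e*f), F2p, mul_zero]
    have xφefc : ∀ z : R, x*(φ e*(f*z)) = 0 := fun z => by
      rw [← Cxf (φ e*(f*z)), F2c, mul_zero]
    have eφfx : e*(φ f*x) = 0 := by rw [← hex]; exact F1c x
    have eφfxc : ∀ z : R, e*(φ f*(x*z)) = 0 := fun z => by
      rw [← Cex z]; exact F1c (x*z)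
    have prod1 : (e - x)*(x + f) = 0 := by
      calc (e - x)*(x + f) = e*x + e*f - x*x - x*f := by noncomm_ring
      _ = 0 := by rw [hex, hef, hxx, hxf]; abel
    have prod2 : (x + f)*(e - x) = 0 := by
      calc (x + f)*(e - x) = x*e + f*e - x*x - f*x := by noncomm_ring
      _ = 0 := by rw [hxe, hfe, hxx, hfx]; abel
    have A := hP (e - x) (x + f) prod1 prod2
    rw [map_sub, map_add] at A
    have Pxx := hP x x hxx hxx
    have E4 : φ e*x + x*φ e + (e*φ x + φ x*e) - (φ x*f + f*φ x + (x*φ f + φ f*x)) = 0 := by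
      calc φ e*x + x*φ e + (e*φ x + φ x*e) - (φ x*f + f*φ x + (x*φ f + φ f*x))
          = ((φ e - φ x)*(x + f) + (x + f)*(φ e - φ x) + (e - x)*(φ x + φ f) + (φ x + φ f)*(e - x))
            - (φ e*f + f*φ e + e*φ f + φ f*e)
            + (φ x*x + x*φ x + x*φ x + φ x*x) := by noncomm_ring
      _ = 0 := by rw [A, star, Pxx]; noncomm_ring
    have C8 : e*(φ e*x) = x*(φ f*f) := by
      have t : e*((φ e*x + x*φ e + (e*φ x + φ x*e) - (φ x*f + f*φ x + (x*φ f + φ f*x)))*f)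
          = e*(0*f) := by rw [E4]
      simp only [mul_add, add_mul, mul_sub, sub_mul, mul_neg, neg_mul, mul_assoc,
        hee, hef, hfe, hff, Cee, Cef, Cfe, Cff, hex, hxf, hxe, hfx, hxx,
        Cxe, Cxf, Cex, Cfx, Cxx, F1c, F1p, F2c, F2p, xφef, xφefc, eφfx, eφfxc,
        mul_zero, zero_mul, add_zero, zero_add, sub_zero, zero_sub, sub_self, neg_zero,
        neg_neg] at t
      rw [sub_eq_zero, add_comm (e*(φ e*x))] at t
      exact add_left_cancel t
    have Z3 : x*φ 1*x = 0 := by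
      rw [skfe x x (φ 1) hxf hex, F4, mul_zero, zero_mul]
    have Z4 : x*φ 1*e = 0 := by
      rw [skfe x e (φ 1) hxf hee, F4, mul_zero, zero_mul]
    have Z6 : f*φ 1*x = 0 := by
      rw [skfe f x (φ 1) hff hex, F4, mul_zero, zero_mul]
    have Z1 : e*φ 1*x = x*φ 1*f := by
      rw [hφ1]
      calc e*(φ e + φ f)*x = e*(φ e*x) + e*(φ f*x) := by noncomm_ring
      _ = x*(φ e*f) + x*(φ f*f) := by rw [C8, eφfx, xφef]; abel
      _ = x*((φ e + φ f)*f) := by noncomm_ring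
      _ = x*(φ e + φ f)*f := by noncomm_ring
    have X5 : (e - x)*φ 1*(x + f) + (x + f)*φ 1*(e - x) = 0 := by
      calc (e - x)*φ 1*(x + f) + (x + f)*φ 1*(e - x)
          = (e*φ 1*x - x*φ 1*f) + e*φ 1*f - x*φ 1*x + x*φ 1*e + f*φ 1*e - x*φ 1*x - f*φ 1*x := by
            noncomm_ring
      _ = 0 := by rw [Z1, F3, Z3, Z4, F4, Z6]; abel
    have X3 : x*φ 1*x + x*φ 1*x = 0 := by rw [Z3, add_zero]
    have B1 := haveP (e - x) (x + f) prod1 prod2 X5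
    rw [hψsub, hψadd, ψe0, ψf0] at B1
    have B3 := haveP x x hxx hxx X3
    have E4ψ : e*ψ x + ψ x*e - (ψ x*f + f*ψ x) = 0 := by
      calc e*ψ x + ψ x*e - (ψ x*f + f*ψ x)
          = ((0 - ψ x)*(x + f) + (x + f)*(0 - ψ x) + ((e - x)*(ψ x + 0) + (ψ x + 0)*(e - x)))
            + (ψ x*x + x*ψ x + (x*ψ x + ψ x*x)) := by noncomm_ring
      _ = 0 := by rw [B1, B3]; abel
    have eψxe : e*(ψ x*e) = 0 := by
      have t : e*((e*ψ x + ψ x*e - (ψ x*f + f*ψ x))*e) = e*(0*e) := by rw [E4ψ]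
      simp only [mul_add, add_mul, mul_sub, sub_mul, mul_neg, neg_mul, mul_assoc,
        hee, hef, hfe, hff, Cee, Cef, Cfe, Cff,
        mul_zero, zero_mul, add_zero, zero_add, sub_zero, zero_sub, sub_self, neg_zero,
        neg_neg] at t
      have t2 : e*ψ x*e + e*ψ x*e = 0 := by simpa [mul_assoc] using t
      have := h2A (ψ x) t2
      simpa [mul_assoc] using this
    have fψxf : f*(ψ x*f) = 0 := by
      have t : f*((e*ψ x + ψ x*e - (ψ x*f + f*ψ x))*f) = f*(0*f) := by rw [E4ψ]
      simp only [mul_add, add_mul, mul_sub, sub_mul, mul_neg, neg_mul, mul_assoc,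
        hee, hef, hfe, hff, Cee, Cef, Cfe, Cff,
        mul_zero, zero_mul, add_zero, zero_add, sub_zero, zero_sub, sub_self, neg_zero,
        neg_neg] at t
      have t2 : f*ψ x*f + f*ψ x*f = 0 := by
        rw [← neg_eq_zero]
        simpa [mul_assoc] using t
      have := h2B (ψ x) t2
      simpa [mul_assoc] using this
    have conj2 : ψ x*f + f*ψ x = ψ x := by
      rw [← sub_eq_zero]
      apply hz <;>
        (simp only [mul_add, add_mul, mul_sub, sub_mul, mul_neg, neg_mul, mul_assoc,
          hee, hef, hfe, hff, Cee, Cef, Cfe, Cff, eψxe, fψxf,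
          mul_zero, zero_mul, add_zero, zero_add, sub_zero, zero_sub, sub_self, neg_zero,
          neg_neg]; try abel)
    exact ⟨Z1, conj2⟩
  intro a m ha hm
  have hea : e*a = a := by
    rw [ha, ← mul_assoc, ← mul_assoc, hee]
  have hae : a*e = a := by
    rw [ha, mul_assoc, hee]
  have haf : a*f = 0 := by
    rw [← hae, mul_assoc, hef, mul_zero]
  have hfa : f*a = 0 := by
    rw [← hea, ← mul_assoc, hfe, zero_mul]
  have hem : e*m = m := by
    rw [hm, ← mul_assoc, ← mul_assoc, hee]
  have hmf : m*f = m := by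
    rw [hm, mul_assoc, hff]
  have hme : m*e = 0 := by
    rw [hm, mul_assoc, mul_assoc, hfe, mul_zero, mul_zero]
  have hfm : f*m = 0 := by
    rw [← hem, ← mul_assoc, hfe, zero_mul]
  have hma : m*a = 0 := by
    rw [← hea, ← mul_assoc, hme, zero_mul]
  have hmm0 : m*m = 0 := by
    calc m*m = m*(e*m) := by rw [hem]
    _ = (m*e)*m := by noncomm_ring
    _ = 0 := by rw [hme, zero_mul]
  have hew : e*(a*m) = a*m := by rw [← mul_assoc, hea]
  have hwf : a*m*f = a*m := by rw [mul_assoc, hmf]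
  have hwe : a*m*e = 0 := by rw [mul_assoc, hme, mul_zero]
  have hfw : f*(a*m) = 0 := by rw [← mul_assoc, hfa, zero_mul]
  have hwm : a*m*m = 0 := by rw [mul_assoc, hmm0, mul_zero]
  have hmw : m*(a*m) = 0 := by rw [← mul_assoc, hma, zero_mul]
  obtain ⟨Z1m, C5m⟩ := key m hem hmf hme hfm
  obtain ⟨Z1w, C5w⟩ := key (a*m) hew hwf hwe hfw
  -- extras
  have X1 : a*φ 1*f + f*φ 1*a = 0 := by
    rw [skef a f (φ 1) hae hff, skfe f a (φ 1) hff hea, F3, F4]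
    simp
  have X2 : a*m*φ 1*m + m*φ 1*(a*m) = 0 := by
    rw [skfe (a*m) m (φ 1) hwf hem, skfe m (a*m) (φ 1) hmf hew, F4]
    simp
  have haφ1m : a*φ 1*m = a*m*φ 1*f := by
    calc a*φ 1*m = (a*e)*φ 1*m := by rw [hae]
    _ = a*(e*φ 1*m) := by noncomm_ring
    _ = a*(m*φ 1*f) := by rw [Z1m]
    _ = a*m*φ 1*f := by noncomm_ring
  have X6 : (a - a*m)*φ 1*(m + f) + (m + f)*φ 1*(a - a*m) = 0 := by
    calc (a - a*m)*φ 1*(m + f) + (m + f)*φ 1*(a - a*m)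
        = (a*φ 1*m - a*m*φ 1*f) + a*φ 1*f - a*m*φ 1*m + m*φ 1*a + f*φ 1*a
          - m*φ 1*(a*m) - f*φ 1*(a*m) := by noncomm_ring
    _ = 0 := by
        rw [haφ1m, skef a f (φ 1) hae hff, F3,
          skfe (a*m) m (φ 1) hwf hem, F4,
          skfe m a (φ 1) hmf hea, F4,
          skfe f a (φ 1) hff hea, F4,
          skfe m (a*m) (φ 1) hmf hew, F4,
          skfe f (a*m) (φ 1) hff hew, F4]
        simp
  have prodA1 : (a - a*m)*(m + f) = 0 := by
    calc (a - a*m)*(m + f) = a*m + a*f - a*m*m - a*m*f := by noncomm_ring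
    _ = 0 := by rw [haf, hwm, hwf]; abel
  have prodA2 : (m + f)*(a - a*m) = 0 := by
    calc (m + f)*(a - a*m) = m*a + f*a - m*(a*m) - f*(a*m) := by noncomm_ring
    _ = 0 := by rw [hma, hfa, hmw, hfw]; abel
  have C1 := haveP (a - a*m) (m + f) prodA1 prodA2 X6
  rw [hψsub, hψadd, ψf0] at C1
  have C2 := haveP a f haf hfa X1
  rw [ψf0] at C2
  have C3 := haveP (a*m) m hwm hmw X2
  rw [hma, add_zero]
  have final : (ψ a*m + m*ψ a) + (a*ψ m + ψ m*a) = ψ (a*m) := by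
    calc (ψ a*m + m*ψ a) + (a*ψ m + ψ m*a)
        = ((ψ a - ψ (a*m))*(m + f) + (m + f)*(ψ a - ψ (a*m))
            + ((a - a*m)*(ψ m + 0) + (ψ m + 0)*(a - a*m)))
          - (ψ a*f + f*ψ a + (a*0 + 0*a))
          + (ψ (a*m)*m + m*ψ (a*m) + (a*m*ψ m + ψ m*(a*m)))
          + (ψ (a*m)*f + f*ψ (a*m)) := by noncomm_ring
    _ = 0 - 0 + 0 + ψ (a*m) := by rw [C1, C2, C3, C5w]
    _ = ψ (a*m) := by abel
  exact final.symm

theorem psi_jordan_on_diag_offdiag_same_row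
    {R : Type*} [Ring R] (e : R) (he : e * e = e)
    (h2A : ∀ x : R, e * x * e + e * x * e = 0 → e * x * e = 0)
    (h2B : ∀ x : R, (1 - e) * x * (1 - e) + (1 - e) * x * (1 - e) = 0 →
      (1 - e) * x * (1 - e) = 0)
    (hlf : ∀ a : R, a = e * a * e → (∀ x : R, a * (e * x * (1 - e)) = 0) → a = 0)
    (hrf : ∀ b : R, b = (1 - e) * b * (1 - e) → (∀ x : R, (e * x * (1 - e)) * b = 0) → b = 0)
    (φ : R →+ R)
    (hP : ∀ U V : R, U * V = 0 → V * U = 0 →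
      φ U * V + V * φ U + U * φ V + φ V * U = 0)
    (ψ : R → R)
    (hψ : ∀ U : R, ψ U = φ U - φ 1 * U +
      ((e * φ e * (1 - e) + (1 - e) * φ (1 - e) * e) * U -
        U * (e * φ e * (1 - e) + (1 - e) * φ (1 - e) * e))) :
    (∀ a m : R, a = e * a * e → m = e * m * (1 - e) →
      ψ (a * m + m * a) = (ψ a * m + m * ψ a) + (a * ψ m + ψ m * a)) ∧
    (∀ b n : R, b = (1 - e) * b * (1 - e) → n = (1 - e) * n * e →
      ψ (b * n + n * b) = (ψ b * n + n * ψ b) + (b * ψ n + ψ n * b)) := by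
  have hff : (1 - e) * (1 - e) = 1 - e := by
    have h : (1 - e) * (1 - e) = 1 - e - e + e * e := by noncomm_ring
    rw [h, he]; abel
  have hef : e * (1 - e) = 0 := by rw [mul_sub, mul_one, he, sub_self]
  have hfe : (1 - e) * e = 0 := by rw [sub_mul, one_mul, he, sub_self]
  have hef1 : e + (1 - e) = 1 := by abel
  have hfe1 : (1 - e) + e = 1 := by abel
  have hψ' : ∀ U : R, ψ U = φ U - φ 1 * U +
      (((1 - e) * φ (1 - e) * e + e * φ e * (1 - e)) * U -
        U * ((1 - e) * φ (1 - e) * e + e * φ e * (1 - e))) := by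
    intro U; rw [hψ U]; noncomm_ring
  constructor
  · exact aux e (1 - e) he hff hef hfe hef1 h2A h2B φ hP ψ hψ
  · exact aux (1 - e) e hff he hfe hef hfe1 h2B h2A φ hP ψ hψ'
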